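/- For any coloring of an AGW graph and any weight function w, every F-clique has the same cardinality, equal to w(V)/w* (the number of parts of a partition of V into F-maximal sets). -/

import Mathlib

/-- A directed cycle in the multigraph `E`: a nonempty list of distinct vertices,
consecutive vertices joined by edges, and an edge from the last back to the first. -/
def IsCycle {V : Type} (E : V → Multiset V) (l : List V) : Prop :=
  ∃ h : l ≠ [], l.Nodup ∧ l.Chain' (fun a b => b ∈ E a) ∧ l.head h ∈ E (l.getLast h)

/-- An AGW graph: constant outdegree `k`, strongly connected, and the gcd of the
lengths of all directed cycles is 1 (every common divisor of cycle lengths is 1). -/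
def IsAGW {V : Type} (E : V → Multiset V) (k : ℕ) : Prop :=
  (∀ v, Multiset.card (E v) = k) ∧
  (∀ u v : V, Relation.ReflTransGen (fun a b => b ∈ E a) u v) ∧
  (∀ d : ℕ, (∀ l : List V, IsCycle E l → d ∣ l.length) → d = 1)

/-- A coloring of the multigraph: for every vertex `v` the multiset of images
`{δ a v : a ∈ Fin k}` (with multiplicity) equals `E v`. -/
def IsColoring {V : Type} [Fintype V] {k : ℕ} (E : V → Multiset V)
    (δ : Fin k → V → V) : Prop :=
  ∀ v, Multiset.map (fun a => δ a v) (Finset.univ : Finset (Fin k)).val = E v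

/-- The map `δ_s` of a word `s`: apply the letters of `s` from left to right. -/
def wordMap {V : Type} {k : ℕ} (δ : Fin k → V → V) (s : List (Fin k)) (v : V) : V :=
  s.foldl (fun x a => δ a x) v

/-- A pair of states is synchronizing if some word maps them to the same state. -/
def SyncPair {V : Type} {k : ℕ} (δ : Fin k → V → V) (p q : V) : Prop :=
  ∃ s : List (Fin k), wordMap δ s p = wordMap δ s q

/-- A pair is stable if all of its images under words are equal or synchronizing. -/
def Stable {V : Type} {k : ℕ} (δ : Fin k → V → V) (p q : V) : Prop :=
  ∀ u : List (Fin k), SyncPair δ (wordMap δ u p) (wordMap δ u q)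

/-- A word is synchronizing if it maps the whole state set to a single state. -/
def IsSynchronizingWord {V : Type} {k : ℕ} (δ : Fin k → V → V) (s : List (Fin k)) : Prop :=
  ∃ q : V, ∀ v : V, wordMap δ s v = q

/-- An F-clique: an image `V·s` of the whole state set in which every pair of
distinct states is a deadlock (not synchronizing). -/
def IsFClique {V : Type} [Fintype V] [DecidableEq V] {k : ℕ}
    (δ : Fin k → V → V) (F : Finset V) : Prop :=
  (∃ s : List (Fin k), F = Finset.image (wordMap δ s) Finset.univ) ∧
  ∀ p ∈ F, ∀ q ∈ F, p ≠ q → ¬ SyncPair δ p q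

/-- A weight function: positive and a left eigenvector of the adjacency matrix
(multiplicities of edges) with eigenvalue `k`. -/
def IsWeight {V : Type} [Fintype V] [DecidableEq V] (E : V → Multiset V) (k : ℕ)
    (w : V → ℕ) : Prop :=
  (∀ v, 1 ≤ w v) ∧ ∀ q, (∑ p, w p * (E p).count q) = k * w q

/-- The weight of a set of vertices. -/
def weight {V : Type} (w : V → ℕ) (D : Finset V) : ℕ := ∑ p ∈ D, w p

/-- `D` is mapped to a single state by some word. -/
def IsSyncSet {V : Type} [Fintype V] [DecidableEq V] {k : ℕ} (δ : Fin k → V → V)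
    (D : Finset V) : Prop :=
  ∃ s : List (Fin k), (D.image (wordMap δ s)).card = 1

/-- An F-maximal set: a set mapped to a single state by some word, of maximal weight. -/
def IsFMaximal {V : Type} [Fintype V] [DecidableEq V] {k : ℕ} (δ : Fin k → V → V)
    (w : V → ℕ) (D : Finset V) : Prop :=
  IsSyncSet δ D ∧ ∀ D' : Finset V, IsSyncSet δ D' → weight w D' ≤ weight w D

/-- `w*`: the maximal weight of a set mapped to a single state by some word. -/
noncomputable def wstar {V : Type} [Fintype V] [DecidableEq V] {k : ℕ}
    (δ : Fin k → V → V) (w : V → ℕ) : ℕ :=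
  sSup {m | ∃ D : Finset V, IsSyncSet δ D ∧ weight w D = m}

/-- A spanning subgraph: a choice of one outgoing edge of every vertex. -/
def IsSpanning {V : Type} (E : V → Multiset V) (f : V → V) : Prop :=
  ∀ v, f v ∈ E v

/-- The level of a vertex: the least `m` such that `f^[m] v` is `f`-periodic. -/
noncomputable def level {V : Type} (f : V → V) (v : V) : ℕ :=
  sInf {m | ∃ n > 0, f^[n] (f^[m] v) = f^[m] v}

/-- The root of a vertex: its image on the cycle reached along its tree. -/
noncomputable def root {V : Type} (f : V → V) (v : V) : V :=
  f^[level f v] v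

namespace FCliqueAux

open Finset

set_option linter.unusedSectionVars false

variable {V : Type} [Fintype V] [DecidableEq V] {k : ℕ}

/-- Preimage of a set under the map of a word. -/
def pre (δ : Fin k → V → V) (s : List (Fin k)) (D : Finset V) : Finset V :=
  Finset.univ.filter (fun v => wordMap δ s v ∈ D)

lemma mem_pre {δ : Fin k → V → V} {s : List (Fin k)} {D : Finset V} {v : V} :
    v ∈ pre δ s D ↔ wordMap δ s v ∈ D := by simp [pre]

lemma wordMap_append (δ : Fin k → V → V) (s t : List (Fin k)) (v : V) :
    wordMap δ (s ++ t) v = wordMap δ t (wordMap δ s v) :=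
  List.foldl_append

lemma wordMap_cons (δ : Fin k → V → V) (a : Fin k) (s : List (Fin k)) (v : V) :
    wordMap δ (a :: s) v = wordMap δ s (δ a v) := rfl

lemma wordMap_singleton (δ : Fin k → V → V) (a : Fin k) (v : V) :
    wordMap δ [a] v = δ a v := rfl

lemma pre_append (δ : Fin k → V → V) (s t : List (Fin k)) (D : Finset V) :
    pre δ (s ++ t) D = pre δ s (pre δ t D) := by
  ext v; simp [mem_pre, wordMap_append]

lemma pre_cons (δ : Fin k → V → V) (a : Fin k) (s : List (Fin k)) (D : Finset V) :
    pre δ (a :: s) D = pre δ [a] (pre δ s D) := by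
  ext v; rw [mem_pre, mem_pre, mem_pre, wordMap_singleton, wordMap_cons]

lemma isSyncSet_iff {δ : Fin k → V → V} {D : Finset V} :
    IsSyncSet δ D ↔ ∃ (s : List (Fin k)) (x : V), D.Nonempty ∧ ∀ v ∈ D, wordMap δ s v = x := by
  constructor
  · rintro ⟨s, hs⟩
    obtain ⟨x, hx⟩ := Finset.card_eq_one.mp hs
    refine ⟨s, x, ?_, fun v hv => ?_⟩
    · rcases D.eq_empty_or_nonempty with h | h
      · subst h; exact absurd hx.symm (Finset.singleton_ne_empty x)
      · exact h
    · have : wordMap δ s v ∈ D.image (wordMap δ s) := Finset.mem_image_of_mem _ hv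
      rw [hx] at this; simpa using this
  · rintro ⟨s, x, ⟨v0, hv0⟩, h⟩
    refine ⟨s, ?_⟩
    have : D.image (wordMap δ s) = {x} := by
      apply Finset.eq_singleton_iff_unique_mem.mpr
      constructor
      · exact (h v0 hv0) ▸ Finset.mem_image_of_mem _ hv0
      · rintro y hy
        obtain ⟨v, hv, rfl⟩ := Finset.mem_image.mp hy
        exact h v hv
    rw [this]; simp

lemma weight_mono {w : V → ℕ} {D D' : Finset V} (h : D ⊆ D') : weight w D ≤ weight w D' :=
  Finset.sum_le_sum_of_subset h

lemma bddAbove_weights (δ : Fin k → V → V) (w : V → ℕ) :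
    BddAbove {m | ∃ D : Finset V, IsSyncSet δ D ∧ weight w D = m} := by
  refine ⟨weight w Finset.univ, ?_⟩
  rintro m ⟨D, _, rfl⟩
  exact weight_mono (Finset.subset_univ D)

lemma weight_le_wstar {δ : Fin k → V → V} {w : V → ℕ} {D : Finset V}
    (hD : IsSyncSet δ D) : weight w D ≤ wstar δ w :=
  le_csSup (bddAbove_weights δ w) ⟨D, hD, rfl⟩

lemma singleton_sync (δ : Fin k → V → V) (v : V) : IsSyncSet δ {v} :=
  isSyncSet_iff.mpr ⟨[], v, Finset.singleton_nonempty v, by simp [wordMap]⟩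

lemma exists_max [Nonempty V] (δ : Fin k → V → V) (w : V → ℕ) :
    ∃ D : Finset V, IsSyncSet δ D ∧ weight w D = wstar δ w := by
  obtain ⟨v0⟩ := (inferInstance : Nonempty V)
  have hne : {m | ∃ D : Finset V, IsSyncSet δ D ∧ weight w D = m}.Nonempty :=
    ⟨weight w ({v0} : Finset V), ⟨{v0}, singleton_sync δ v0, rfl⟩⟩
  exact Nat.sSup_mem hne (bddAbove_weights δ w)

lemma one_le_wstar [Nonempty V] (δ : Fin k → V → V) {w : V → ℕ} (hw1 : ∀ v, 1 ≤ w v) :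
    1 ≤ wstar δ w := by
  obtain ⟨v0⟩ := (inferInstance : Nonempty V)
  calc 1 ≤ w v0 := hw1 v0
    _ = weight w {v0} := (Finset.sum_singleton _ _).symm
    _ ≤ wstar δ w := weight_le_wstar (singleton_sync δ v0)

lemma nonempty_of_weight_pos {w : V → ℕ} {D : Finset V} (h : 1 ≤ weight w D) :
    D.Nonempty := by
  rcases D.eq_empty_or_nonempty with rfl | h'
  · simp [weight] at h
  · exact h'

lemma count_letters {E : V → Multiset V} {δ : Fin k → V → V} (hδ : IsColoring E δ)
    (v q : V) :
    (Finset.univ.filter (fun a : Fin k => δ a v = q)).card = (E v).count q := by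
  rw [← hδ v, Multiset.count_map]
  simp only [Finset.card, Finset.filter_val]
  exact congrArg Multiset.card (Multiset.filter_congr (fun a _ => eq_comm))

lemma card_letters_mem {E : V → Multiset V} {δ : Fin k → V → V} (hδ : IsColoring E δ)
    (v : V) (D : Finset V) :
    (Finset.univ.filter (fun a : Fin k => δ a v ∈ D)).card = ∑ q ∈ D, (E v).count q := by
  rw [Finset.card_eq_sum_card_fiberwise (f := fun a => δ a v) (s := Finset.univ.filter (fun a : Fin k => δ a v ∈ D)) (t := D)
    (fun a ha => (Finset.mem_filter.mp ha).2)]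
  refine Finset.sum_congr rfl fun q hq => ?_
  rw [Finset.filter_filter]
  rw [Finset.filter_congr (fun a _ => by
    constructor
    · exact fun h => h.2
    · exact fun h => ⟨by rw [h]; exact hq, h⟩)]
  exact count_letters hδ v q

lemma sum_pre_letter {E : V → Multiset V} {δ : Fin k → V → V} {w : V → ℕ}
    (hδ : IsColoring E δ) (hw : IsWeight E k w) (D : Finset V) :
    ∑ a : Fin k, weight w (pre δ [a] D) = k * weight w D := by
  calc ∑ a : Fin k, weight w (pre δ [a] D)
      = ∑ a : Fin k, ∑ v : V, if δ a v ∈ D then w v else 0 := by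
        refine Finset.sum_congr rfl fun a _ => ?_
        rw [weight, pre, Finset.sum_filter]
        simp only [wordMap_singleton]
        rfl
    _ = ∑ v : V, ∑ a : Fin k, if δ a v ∈ D then w v else 0 := Finset.sum_comm
    _ = ∑ v : V, (Finset.univ.filter (fun a : Fin k => δ a v ∈ D)).card * w v := by
        refine Finset.sum_congr rfl fun v _ => ?_
        rw [← Finset.sum_filter, Finset.sum_const, smul_eq_mul]
    _ = ∑ v : V, ∑ q ∈ D, w v * (E v).count q := by
        refine Finset.sum_congr rfl fun v _ => ?_
        rw [card_letters_mem hδ v D, Finset.sum_mul]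
        exact Finset.sum_congr rfl fun q _ => mul_comm _ _
    _ = ∑ q ∈ D, ∑ v : V, w v * (E v).count q := Finset.sum_comm
    _ = ∑ q ∈ D, k * w q := Finset.sum_congr rfl fun q _ => hw.2 q
    _ = k * weight w D := by rw [weight, Finset.mul_sum]

lemma pre_letter_max [Nonempty V] {E : V → Multiset V} {δ : Fin k → V → V} {w : V → ℕ}
    (hδ : IsColoring E δ) (hw : IsWeight E k w) (hk : 0 < k)
    {D : Finset V} (hD : IsSyncSet δ D) (hDw : weight w D = wstar δ w) (a : Fin k) :
    IsSyncSet δ (pre δ [a] D) ∧ weight w (pre δ [a] D) = wstar δ w := by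
  obtain ⟨t, x, _, ht⟩ := isSyncSet_iff.mp hD
  have hle : ∀ b : Fin k, weight w (pre δ [b] D) ≤ wstar δ w := by
    intro b
    rcases (pre δ [b] D).eq_empty_or_nonempty with h | h
    · rw [h]; exact Nat.zero_le _
    · refine weight_le_wstar (isSyncSet_iff.mpr ⟨b :: t, x, h, fun v hv => ?_⟩)
      rw [wordMap_cons]
      exact ht _ (by simpa [wordMap_singleton] using mem_pre.mp hv)
  have hsum := sum_pre_letter hδ hw D
  rw [hDw] at hsum
  have heq : ∀ b : Fin k, weight w (pre δ [b] D) = wstar δ w := by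
    by_contra hcon
    push_neg at hcon
    obtain ⟨b, hb⟩ := hcon
    have hlt : weight w (pre δ [b] D) < wstar δ w := lt_of_le_of_ne (hle b) hb
    have hstrict : ∑ a : Fin k, weight w (pre δ [a] D) < ∑ _a : Fin k, wstar δ w :=
      Finset.sum_lt_sum (fun i _ => hle i) ⟨b, Finset.mem_univ b, hlt⟩
    rw [hsum, Finset.sum_const, Finset.card_univ, Fintype.card_fin, smul_eq_mul] at hstrict
    omega
  have hne : (pre δ [a] D).Nonempty :=
    nonempty_of_weight_pos (by rw [heq a]; exact one_le_wstar δ hw.1)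
  refine ⟨isSyncSet_iff.mpr ⟨a :: t, x, hne, fun v hv => ?_⟩, heq a⟩
  rw [wordMap_cons]
  exact ht _ (by simpa [wordMap_singleton] using mem_pre.mp hv)

lemma pre_word_max [Nonempty V] {E : V → Multiset V} {δ : Fin k → V → V} {w : V → ℕ}
    (hδ : IsColoring E δ) (hw : IsWeight E k w) (hk : 0 < k)
    {D : Finset V} (hD : IsSyncSet δ D) (hDw : weight w D = wstar δ w) (s : List (Fin k)) :
    IsSyncSet δ (pre δ s D) ∧ weight w (pre δ s D) = wstar δ w := by
  induction s with
  | nil =>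
    have h : pre δ [] D = D := by ext v; simp [mem_pre, wordMap]
    rw [h]; exact ⟨hD, hDw⟩
  | cons a s ih =>
    rw [pre_cons]
    exact pre_letter_max hδ hw hk ih.1 ih.2 a

lemma reach {E : V → Multiset V} {δ : Fin k → V → V} (hδ : IsColoring E δ)
    (hconn : ∀ u v : V, Relation.ReflTransGen (fun a b => b ∈ E a) u v)
    (p q : V) : ∃ u : List (Fin k), wordMap δ u p = q := by
  have h := hconn p q
  induction h with
  | refl => exact ⟨[], rfl⟩
  | tail hab hbc ih =>
    obtain ⟨u, hu⟩ := ih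
    rw [← hδ _] at hbc
    obtain ⟨a, _, ha⟩ := Multiset.mem_map.mp hbc
    exact ⟨u ++ [a], by rw [wordMap_append, hu, wordMap_singleton, ha]⟩

lemma k_pos {E : V → Multiset V} (hAGW : IsAGW E k) : 0 < k := by
  rcases Nat.eq_zero_or_pos k with hk | hk
  · exfalso
    have h2 := hAGW.2.2 2 ?_
    · omega
    · intro l hl
      exfalso
      obtain ⟨hne, _, _, hhead⟩ := hl
      have hcz : E (l.getLast hne) = 0 := by
        have hc := hAGW.1 (l.getLast hne)
        rw [hk] at hc
        exact Multiset.card_eq_zero.mp hc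
      rw [hcz] at hhead
      exact Multiset.notMem_zero _ hhead
  · exact hk

end FCliqueAux

open FCliqueAux Finset

/-- Every F-clique has the same cardinality, equal to `w(V)/w*`
(the size of a partition of `V` into F-maximal sets). -/
theorem FClique_card {V : Type} [Fintype V] [DecidableEq V] [Nonempty V]
    (E : V → Multiset V) (k : ℕ) (hAGW : IsAGW E k)
    (δ : Fin k → V → V) (hδ : IsColoring E δ) (w : V → ℕ) (hw : IsWeight E k w)
    (F : Finset V) (hF : IsFClique δ F) :
    F.card = weight w Finset.univ / wstar δ w ∧
      F.card * wstar δ w = weight w Finset.univ := by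

  classical
  have hk : 0 < k := k_pos hAGW
  have hconn := hAGW.2.1
  have hW1 : 1 ≤ wstar δ w := one_le_wstar δ hw.1
  -- a maximal sync set, enlarged to a full preimage
  obtain ⟨D0, hD0s, hD0w⟩ := exists_max δ w
  obtain ⟨t0, x0, hD0ne, ht0⟩ := isSyncSet_iff.mp hD0s
  set D1 : Finset V := pre δ t0 {x0} with hD1def
  have hD0sub : D0 ⊆ D1 := fun v hv => mem_pre.mpr (by rw [ht0 v hv]; exact mem_singleton_self x0)
  have hD1ne : D1.Nonempty := hD0ne.mono hD0sub
  have hD1s : IsSyncSet δ D1 :=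
    isSyncSet_iff.mpr ⟨t0, x0, hD1ne, fun v hv => by simpa using mem_pre.mp hv⟩
  have hD1w : weight w D1 = wstar δ w :=
    le_antisymm (weight_le_wstar hD1s) (hD0w ▸ weight_mono hD0sub)
  -- every state lies in a maximal full preimage of {x0}
  have hstate : ∀ q : V, ∃ t : List (Fin k),
      q ∈ pre δ t ({x0} : Finset V) ∧ weight w (pre δ t ({x0} : Finset V)) = wstar δ w := by
    intro q
    obtain ⟨d, hd⟩ := hD1ne
    obtain ⟨u, hu⟩ := reach hδ hconn q d
    refine ⟨u ++ t0, ?_, ?_⟩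
    · rw [pre_append]
      exact mem_pre.mpr (by rw [hu]; exact hd)
    · rw [pre_append]
      exact (pre_word_max hδ hw hk hD1s hD1w u).2
  obtain ⟨⟨s, hFs⟩, hFdead⟩ := hF
  -- every fiber of the clique word has maximal weight
  have hfiber : ∀ q ∈ F, weight w (pre δ s ({q} : Finset V)) = wstar δ w := by
    intro q hq
    obtain ⟨t, hqmem, htw⟩ := hstate q
    have hDqs : IsSyncSet δ (pre δ t ({x0} : Finset V)) :=
      isSyncSet_iff.mpr ⟨t, x0, ⟨q, hqmem⟩, fun v hv => by simpa using mem_pre.mp hv⟩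
    have hmax := pre_word_max hδ hw hk hDqs htw s
    have hsub : pre δ s (pre δ t ({x0} : Finset V)) = pre δ s ({q} : Finset V) := by
      ext v
      have h2 : wordMap δ t q = x0 := by simpa using mem_pre.mp hqmem
      simp only [mem_pre, Finset.mem_singleton]
      constructor
      · intro hv
        have hvF : wordMap δ s v ∈ F := by
          rw [hFs]; exact Finset.mem_image_of_mem _ (Finset.mem_univ v)
        by_contra hne
        refine hFdead _ hvF q hq hne ⟨t, ?_⟩
        rw [hv, h2]
      · intro hv
        rw [hv]; exact h2
    rw [← hsub]
    exact hmax.2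
  -- the fibers partition V
  have hmaps : ∀ v ∈ (Finset.univ : Finset V), wordMap δ s v ∈ F := by
    intro v _
    rw [hFs]; exact Finset.mem_image_of_mem _ (Finset.mem_univ v)
  have hpart : ∑ q ∈ F, weight w (pre δ s ({q} : Finset V)) = weight w Finset.univ := by
    have h := Finset.sum_fiberwise_of_maps_to hmaps w
    rw [weight, ← h]
    refine Finset.sum_congr rfl fun q _ => ?_
    rw [weight]
    congr 1
    ext v
    simp [pre]
  have hsum : F.card * wstar δ w = weight w Finset.univ := by
    rw [← hpart, Finset.sum_congr rfl hfiber, Finset.sum_const, smul_eq_mul]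
  refine ⟨?_, hsum⟩
  rw [← hsum, Nat.mul_div_cancel _ (by omega : 0 < wstar δ w)]
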